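/- (Inductive trapping estimate). In the setting of hypothesis (A), let γ(ω)>0 satisfy γ(ω)≤δ_0(ω) and L_t(ω)···L_1(ω)γ(ω)≤δ_t(ω) for all t≥1. Then for every a∈X(ω) with ρ(a,x̄(ω))≤γ(ω) and every t≥0: x_t^a(ω)∈X_t(ω), ρ(x_t^a(ω),x̄_t(ω))≤δ_t(ω), and ρ(x_t^a(ω),x̄_t(ω)) ≤ L_t(ω)···L_0(ω)γ(ω) (with L_0:=1). -/
import Mathlib


open MeasureTheory Filter

noncomputable def rdsPath {X Ω : Type*} (f : X → Ω → X) (T : Ω → Ω) (a : X) (ω : Ω) : ℕ → X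
  | 0 => a
  | t + 1 => f (rdsPath f T a ω t) (T^[t] ω)

/-- Inductive trapping estimate: starting within `γ` of the fixed point, the path stays in the
random set, within the `δ_t`-neighborhoods, and satisfies `ρ(x_t^a, x̄_t) ≤ L_t⋯L_0 γ`. -/
theorem stmt5 {Ω X : Type*} [MetricSpace X]
    (T : Ω → Ω) (f : X → Ω → X) (xbar : Ω → X)
    (Xset : Ω → Set X) (L δ : Ω → ℝ)
    (hLpos : ∀ ω, 0 < L ω) (hδpos : ∀ ω, 0 < δ ω)
    (hfix : ∀ ω, xbar (T ω) = f (xbar ω) ω)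
    (hmem : ∀ ω, xbar ω ∈ Xset ω)
    (hinv : ∀ ω, ∀ x ∈ Xset ω, f x ω ∈ Xset (T ω))
    (hLip : ∀ ω, ∀ x ∈ Xset ω, dist x (xbar ω) ≤ δ ω →
      dist (f x ω) (f (xbar ω) ω) ≤ L ω * dist x (xbar ω))
    (ω : Ω) (γ : ℝ) (hγpos : 0 < γ) (hγ0 : γ ≤ δ ω)
    (hγt : ∀ t : ℕ, 1 ≤ t → (∏ i ∈ Finset.range t, L (T^[i] ω)) * γ ≤ δ (T^[t] ω))
    (a : X) (ha : a ∈ Xset ω) (hd : dist a (xbar ω) ≤ γ) :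
    ∀ t : ℕ, rdsPath f T a ω t ∈ Xset (T^[t] ω) ∧
      dist (rdsPath f T a ω t) (xbar (T^[t] ω)) ≤ δ (T^[t] ω) ∧
      dist (rdsPath f T a ω t) (xbar (T^[t] ω)) ≤ (∏ i ∈ Finset.range t, L (T^[i] ω)) * γ := by
  intro t
  induction t with
  | zero => exact ⟨ha, by simpa [rdsPath] using hd.trans hγ0, by simpa [rdsPath] using hd⟩
  | succ t ih =>
    obtain ⟨hX, hδ, hL⟩ := ih
    have hmem' : rdsPath f T a ω (t+1) ∈ Xset (T^[t+1] ω) := by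
      rw [Function.iterate_succ_apply']
      exact hinv _ _ hX
    have hlip := hLip (T^[t] ω) _ hX hδ
    have key : dist (rdsPath f T a ω (t+1)) (xbar (T^[t+1] ω)) ≤
        (∏ i ∈ Finset.range (t+1), L (T^[i] ω)) * γ := by
      rw [Function.iterate_succ_apply', hfix]
      calc dist (f (rdsPath f T a ω t) (T^[t] ω)) (f (xbar (T^[t] ω)) (T^[t] ω))
          ≤ L (T^[t] ω) * dist (rdsPath f T a ω t) (xbar (T^[t] ω)) := hlip
        _ ≤ L (T^[t] ω) * ((∏ i ∈ Finset.range t, L (T^[i] ω)) * γ) := by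
            exact mul_le_mul_of_nonneg_left hL (hLpos _).le
        _ = (∏ i ∈ Finset.range (t+1), L (T^[i] ω)) * γ := by
            rw [Finset.prod_range_succ]; ring
    exact ⟨hmem', le_trans key (hγt (t+1) (Nat.le_add_left 1 t)), key⟩
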